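/- arXiv:2509.06193 — 16 statements merged into one kernel-verified Lean document; each statement's English description precedes it below -/
import Mathlib

section
/- Let (X;μ,η) be a monoid in Rel. Then for every a ∈ X there is a unique element t ∈ X with t ∈ η and μ:(t,a)↦a (the target of a), and a unique element s ∈ X with s ∈ η and μ:(a,s)↦a (the source of a). -/
/-- In a monoid (X;μ,η) in Rel, every element `a` has a unique
target `t ∈ η` with `μ:(t,a)↦a` and a unique source `s ∈ η` with `μ:(a,s)↦a`. -/
theorem relMonoid_unique_target_and_source
    {X : Type*} (μ : X → X → X → Prop) (η : Set X)
    (hassoc : ∀ a b c d : X,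
      (∃ x, μ a b x ∧ μ x c d) ↔ (∃ y, μ b c y ∧ μ a y d))
    (hunitL : ∀ a b : X, (∃ r ∈ η, μ r a b) ↔ a = b)
    (hunitR : ∀ a b : X, (∃ r ∈ η, μ a r b) ↔ a = b) :
    ∀ a : X, (∃! t : X, t ∈ η ∧ μ t a a) ∧ (∃! s : X, s ∈ η ∧ μ a s a) := by
  intro a
  obtain ⟨t, ht, hta⟩ := (hunitL a a).mpr rfl
  obtain ⟨s, hs, has⟩ := (hunitR a a).mpr rfl
  constructor
  · refine ⟨t, ⟨ht, hta⟩, ?_⟩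
    rintro t' ⟨ht', ht'a⟩
    obtain ⟨x, h1, _⟩ := (hassoc t' t a a).mpr ⟨a, hta, ht'a⟩
    have e1 : t = x := (hunitL t x).mp ⟨t', ht', h1⟩
    have e2 : t' = x := (hunitR t' x).mp ⟨t, ht, h1⟩
    rw [e2, ← e1]
  · refine ⟨s, ⟨hs, has⟩, ?_⟩
    rintro s' ⟨hs', has'⟩
    obtain ⟨y, h1, _⟩ := (hassoc a s' s a).mp ⟨a, has', has⟩
    have e1 : s = y := (hunitL s y).mp ⟨s', hs', h1⟩
    have e2 : s' = y := (hunitR s' y).mp ⟨s, hs, h1⟩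
    rw [e2, ← e1]
end

section
/- Let (X;μ,η,δ,ε) be a Frobenius algebra in Rel. Then the relation α is the graph of a bijection: for every x ∈ X there is a unique y ∈ X with (x,y) ∈ α, and for every y ∈ X there is a unique x ∈ X with (x,y) ∈ α. -/
/-- In a Frobenius algebra (X;μ,η,δ,ε) in Rel, the relation
α (defined by (x,y) ∈ α iff ∃ e ∈ ε, μ:(x,y)↦e) is the graph of a bijection. -/
theorem relFrobenius_alpha_graph_of_bijection
    {X : Type*} (μ δ : X → X → X → Prop) (η ε : Set X)
    (hassoc : ∀ a b c d : X,
      (∃ x, μ a b x ∧ μ x c d) ↔ (∃ y, μ b c y ∧ μ a y d))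
    (hunitL : ∀ a b : X, (∃ r ∈ η, μ r a b) ↔ a = b)
    (hunitR : ∀ a b : X, (∃ r ∈ η, μ a r b) ↔ a = b)
    (hcoassoc : ∀ a x y z : X,
      (∃ u, δ a u z ∧ δ u x y) ↔ (∃ v, δ a x v ∧ δ v y z))
    (hcounitL : ∀ a b : X, (∃ e ∈ ε, δ a e b) ↔ a = b)
    (hcounitR : ∀ a b : X, (∃ e ∈ ε, δ a b e) ↔ a = b)
    (hfrob₁ : ∀ a b y z : X,
      (∃ c, μ a b c ∧ δ c y z) ↔ (∃ u, δ b u z ∧ μ a u y))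
    (hfrob₂ : ∀ a b y z : X,
      (∃ c, μ a b c ∧ δ c y z) ↔ (∃ v, δ a y v ∧ μ v b z)) :
    (∀ x : X, ∃! y : X, ∃ e ∈ ε, μ x y e) ∧
    (∀ y : X, ∃! x : X, ∃ e ∈ ε, μ x y e) := by
  -- the "cup" relation
  set S : X → X → Prop := fun x y => ∃ r ∈ η, δ r x y with hS
  set R : X → X → Prop := fun x y => ∃ e ∈ ε, μ x y e with hR
  -- snake identity 1
  have snake1 : ∀ a b : X, (∃ x, S x b ∧ R a x) ↔ a = b := by
    intro a b
    constructor
    · rintro ⟨x, ⟨r, hr, hδ⟩, ⟨e, he, hμ⟩⟩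
      obtain ⟨c, hμc, hδc⟩ := (hfrob₁ a r e b).mpr ⟨x, hδ, hμ⟩
      have hac : a = c := (hunitR a c).mp ⟨r, hr, hμc⟩
      subst hac
      exact (hcounitL a b).mp ⟨e, he, hδc⟩
    · rintro rfl
      obtain ⟨r, hr, hμ⟩ := (hunitR a a).mpr rfl
      obtain ⟨e, he, hδ⟩ := (hcounitL a a).mpr rfl
      obtain ⟨u, h1, h2⟩ := (hfrob₁ a r e a).mp ⟨a, hμ, hδ⟩
      exact ⟨u, ⟨r, hr, h1⟩, ⟨e, he, h2⟩⟩
  -- snake identity 2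
  have snake2 : ∀ a b : X, (∃ y, S a y ∧ R y b) ↔ a = b := by
    intro a b
    constructor
    · rintro ⟨y, ⟨r, hr, hδ⟩, ⟨e, he, hμ⟩⟩
      obtain ⟨c, hμc, hδc⟩ := (hfrob₂ r b a e).mpr ⟨y, hδ, hμ⟩
      have hbc : b = c := (hunitL b c).mp ⟨r, hr, hμc⟩
      subst hbc
      exact ((hcounitR b a).mp ⟨e, he, hδc⟩).symm
    · rintro rfl
      obtain ⟨r, hr, hμ⟩ := (hunitL a a).mpr rfl
      obtain ⟨e, he, hδ⟩ := (hcounitR a a).mpr rfl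
      obtain ⟨v, h1, h2⟩ := (hfrob₂ r a a e).mp ⟨a, hμ, hδ⟩
      exact ⟨v, ⟨r, hr, h1⟩, ⟨e, he, h2⟩⟩
  have RS1 : ∀ a x b : X, R a x → S x b → a = b := fun a x b h1 h2 =>
    (snake1 a b).mp ⟨x, h2, h1⟩
  have RS2 : ∀ a y b : X, S a y → R y b → a = b := fun a y b h1 h2 =>
    (snake2 a b).mp ⟨y, h1, h2⟩
  have ex1 : ∀ a : X, ∃ x, S x a ∧ R a x := fun a => (snake1 a a).mpr rfl
  have ex2 : ∀ a : X, ∃ y, S a y ∧ R y a := fun a => (snake2 a a).mpr rfl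
  constructor
  · intro x
    obtain ⟨w, hSw, hRw⟩ := ex1 x
    refine ⟨w, hRw, ?_⟩
    intro y hy
    obtain ⟨z, hSy, hRz⟩ := ex2 y
    have hzx : x = z := RS1 x y z hy hSy
    subst hzx
    exact RS2 y x w hSy hRw
  · intro y
    obtain ⟨w, hSw, hRw⟩ := ex2 y
    refine ⟨w, hRw, ?_⟩
    intro x hx
    obtain ⟨z, hSz, hRz⟩ := ex1 x
    have hzy : z = y := RS2 z x y hSz hx
    exact (RS1 w y x hRw (hzy ▸ hSz)).symm
end

section
/- Let (X;μ,η,δ,ε) be a Frobenius algebra in Rel and let r ∈ η. Then for every e ∈ X: (e ∈ ε and μ:(r,e)↦e) if and only if (r,e) ∈ α; and (e ∈ ε and μ:(e,r)↦e) if and only if (e,r) ∈ α. In particular, there is a unique counit element e ∈ ε with μ:(r,e)↦e (i.e., with target r), and a unique counit element e' ∈ ε with μ:(e',r)↦e' (i.e., with source r). -/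
/-- In a Frobenius algebra in Rel, for a unit element r ∈ η:
an element e is a counit element with target r iff (r,e) ∈ α; and e is a counit
element with source r iff (e,r) ∈ α. In particular, there is a unique counit
element with target r and a unique one with source r. -/
theorem relFrobenius_counit_of_unit
    {X : Type*} (μ δ : X → X → X → Prop) (η ε : Set X)
    (hassoc : ∀ a b c d : X,
      (∃ x, μ a b x ∧ μ x c d) ↔ (∃ y, μ b c y ∧ μ a y d))
    (hunitL : ∀ a b : X, (∃ r ∈ η, μ r a b) ↔ a = b)
    (hunitR : ∀ a b : X, (∃ r ∈ η, μ a r b) ↔ a = b)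
    (hcoassoc : ∀ a x y z : X,
      (∃ u, δ a u z ∧ δ u x y) ↔ (∃ v, δ a x v ∧ δ v y z))
    (hcounitL : ∀ a b : X, (∃ e ∈ ε, δ a e b) ↔ a = b)
    (hcounitR : ∀ a b : X, (∃ e ∈ ε, δ a b e) ↔ a = b)
    (hfrob₁ : ∀ a b y z : X,
      (∃ c, μ a b c ∧ δ c y z) ↔ (∃ u, δ b u z ∧ μ a u y))
    (hfrob₂ : ∀ a b y z : X,
      (∃ c, μ a b c ∧ δ c y z) ↔ (∃ v, δ a y v ∧ μ v b z)) :
    ∀ r ∈ η,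
      (∀ e : X, (e ∈ ε ∧ μ r e e) ↔ (∃ f ∈ ε, μ r e f)) ∧
      (∀ e : X, (e ∈ ε ∧ μ e r e) ↔ (∃ f ∈ ε, μ e r f)) ∧
      (∃! e : X, e ∈ ε ∧ μ r e e) ∧
      (∃! e : X, e ∈ ε ∧ μ e r e) := by
  intro r hr
  -- r acts as a two-sided unit wherever it acts
  have unitL : ∀ a b : X, μ r a b → a = b := fun a b h => (hunitL a b).mp ⟨r, hr, h⟩
  have unitR : ∀ a b : X, μ a r b → a = b := fun a b h => (hunitR a b).mp ⟨r, hr, h⟩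
  refine ⟨?_, ?_, ?_, ?_⟩
  · intro e
    constructor
    · rintro ⟨he, hm⟩; exact ⟨e, he, hm⟩
    · rintro ⟨f, hf, hm⟩
      have hef : e = f := unitL e f hm
      subst hef; exact ⟨hf, hm⟩
  · intro e
    constructor
    · rintro ⟨he, hm⟩; exact ⟨e, he, hm⟩
    · rintro ⟨f, hf, hm⟩
      have hef : e = f := unitR e f hm
      subst hef; exact ⟨hf, hm⟩
  · -- unique e ∈ ε with μ r e e
    obtain ⟨r', hr', hrr'⟩ := (hunitR r r).mpr rfl   -- μ r r' r
    obtain ⟨e, he, hde⟩ := (hcounitL r r).mpr rfl    -- δ r e r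
    -- Frobenius: from μ r r' r and δ r e r get u with δ r' u r and μ r u e
    obtain ⟨u, hdu, hmu⟩ := (hfrob₁ r r' e r).mp ⟨r, hrr', hde⟩
    have hue : u = e := unitL u e hmu
    subst hue
    refine ⟨u, ⟨he, hmu⟩, ?_⟩
    rintro g ⟨hg, hmg⟩
    -- use hfrob₂ with a = r, b = g, y = u, z = g
    obtain ⟨c, hc1, hc2⟩ := (hfrob₂ r g u g).mpr ⟨r, hde, hmg⟩
    have hgc : g = c := unitL g c hc1
    subst hgc
    -- δ g u g with g ∈ ε (third slot) forces g = u
    exact (hcounitR g u).mp ⟨g, hg, hc2⟩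
  · -- unique e ∈ ε with μ e r e
    obtain ⟨r₂, hr₂, hrr₂⟩ := (hunitL r r).mpr rfl   -- μ r₂ r r
    obtain ⟨e, he, hde⟩ := (hcounitR r r).mpr rfl    -- δ r r e
    -- Frobenius: from μ r₂ r r and δ r r e get v with δ r₂ r v and μ v r e
    obtain ⟨v, hdv, hmv⟩ := (hfrob₂ r₂ r r e).mp ⟨r, hrr₂, hde⟩
    have hve : v = e := unitR v e hmv
    subst hve
    refine ⟨v, ⟨he, hmv⟩, ?_⟩
    rintro g ⟨hg, hmg⟩
    -- use hfrob₁ with a = g, b = r₂, y = g, z = v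
    obtain ⟨c, hc1, hc2⟩ := (hfrob₁ g r₂ g v).mpr ⟨r, hdv, hmg⟩
    have hgc : g = c := (hunitR g c).mp ⟨r₂, hr₂, hc1⟩
    subst hgc
    -- δ g g v with g ∈ ε (middle slot) forces g = v
    exact (hcounitL g v).mp ⟨g, hg, hc2⟩
end

section
/- Let (X;μ,η,δ,ε) be a Frobenius algebra in Rel. Then for all x,y,z ∈ X the following three statements are pairwise equivalent: (1) δ:x↦(y,z); (2) there exists w ∈ X with (z,w) ∈ α and μ:(x,w)↦y; (3) there exists w ∈ X with (w,y) ∈ α and μ:(w,x)↦z. -/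
/-- Key lemma: in a Frobenius algebra in Rel, if some unit r satisfies δ:r↦(a,b),
then μ:(b,a)↦e for some counit element e. -/
theorem relFrobenius_gamma_to_beta {X : Type*} (μ δ : X → X → X → Prop) (η ε : Set X)
    (hunitL : ∀ a b : X, (∃ r ∈ η, μ r a b) ↔ a = b)
    (hunitR : ∀ a b : X, (∃ r ∈ η, μ a r b) ↔ a = b)
    (hcounitL : ∀ a b : X, (∃ e ∈ ε, δ a e b) ↔ a = b)
    (hcounitR : ∀ a b : X, (∃ e ∈ ε, δ a b e) ↔ a = b)
    (hfrob₁ : ∀ a b y z : X,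
      (∃ c, μ a b c ∧ δ c y z) ↔ (∃ u, δ b u z ∧ μ a u y))
    (hfrob₂ : ∀ a b y z : X,
      (∃ c, μ a b c ∧ δ c y z) ↔ (∃ v, δ a y v ∧ μ v b z)) :
    ∀ a b : X, (∃ r ∈ η, δ r a b) → (∃ e ∈ ε, μ b a e) := by
  rintro a b ⟨r, hr, hrab⟩
  obtain ⟨r₁, hr₁, hb1⟩ := (hunitR b b).mpr rfl
  obtain ⟨e₁, he₁, hb2⟩ := (hcounitL b b).mpr rfl
  -- construct an "inverse" u of b : δ r₁ u b and μ b u e₁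
  obtain ⟨u, hδu, hμu⟩ := (hfrob₁ b r₁ e₁ b).mp ⟨b, hb1, hb2⟩
  -- show u = a using Frobenius, unit and counit
  obtain ⟨c, h1, h2⟩ := (hfrob₂ r u a e₁).mpr ⟨b, hrab, hμu⟩
  have huc : u = c := (hunitL u c).mp ⟨r, hr, h1⟩
  have hca : c = a := (hcounitR c a).mp ⟨e₁, he₁, h2⟩
  refine ⟨e₁, he₁, ?_⟩
  rw [← hca, ← huc]
  exact hμu

/-- In a Frobenius algebra in Rel, for all x,y,z the following are
pairwise equivalent: (1) δ:x↦(y,z); (2) ∃ w, (z,w) ∈ α and μ:(x,w)↦y;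
(3) ∃ w, (w,y) ∈ α and μ:(w,x)↦z.  Here (x,y) ∈ α iff ∃ e ∈ ε, μ:(x,y)↦e. -/
theorem relFrobenius_delta_characterization
    {X : Type*} (μ δ : X → X → X → Prop) (η ε : Set X)
    (hassoc : ∀ a b c d : X,
      (∃ x, μ a b x ∧ μ x c d) ↔ (∃ y, μ b c y ∧ μ a y d))
    (hunitL : ∀ a b : X, (∃ r ∈ η, μ r a b) ↔ a = b)
    (hunitR : ∀ a b : X, (∃ r ∈ η, μ a r b) ↔ a = b)
    (hcoassoc : ∀ a x y z : X,
      (∃ u, δ a u z ∧ δ u x y) ↔ (∃ v, δ a x v ∧ δ v y z))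
    (hcounitL : ∀ a b : X, (∃ e ∈ ε, δ a e b) ↔ a = b)
    (hcounitR : ∀ a b : X, (∃ e ∈ ε, δ a b e) ↔ a = b)
    (hfrob₁ : ∀ a b y z : X,
      (∃ c, μ a b c ∧ δ c y z) ↔ (∃ u, δ b u z ∧ μ a u y))
    (hfrob₂ : ∀ a b y z : X,
      (∃ c, μ a b c ∧ δ c y z) ↔ (∃ v, δ a y v ∧ μ v b z)) :
    ∀ x y z : X,
      (δ x y z ↔ ∃ w : X, (∃ e ∈ ε, μ z w e) ∧ μ x w y) ∧
      (δ x y z ↔ ∃ w : X, (∃ e ∈ ε, μ w y e) ∧ μ w x z) := by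
  -- γ(a,b) → β(b,a)
  have C1 : ∀ a b : X, (∃ r ∈ η, δ r a b) → (∃ e ∈ ε, μ b a e) :=
    relFrobenius_gamma_to_beta μ δ η ε hunitL hunitR hcounitL hcounitR hfrob₁ hfrob₂
  -- the dual Frobenius algebra: μ' a b c := δ c a b, δ' a b c := μ b c a, units ε, counits η
  have C2 : ∀ a b : X, (∃ e ∈ ε, μ a b e) → (∃ r ∈ η, δ r b a) := by
    have := relFrobenius_gamma_to_beta (fun a b c => δ c a b) (fun a b c => μ b c a) ε η
      (fun a b => (hcounitL b a).trans eq_comm)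
      (fun a b => (hcounitR b a).trans eq_comm)
      (fun a b => (hunitL b a).trans eq_comm)
      (fun a b => (hunitR b a).trans eq_comm)
      (fun a b y z => by
        constructor
        · rintro ⟨c, h1, h2⟩
          obtain ⟨v, hv1, hv2⟩ := (hfrob₂ y z a b).mp ⟨c, h2, h1⟩
          exact ⟨v, hv2, hv1⟩
        · rintro ⟨u, h1, h2⟩
          obtain ⟨c, hc1, hc2⟩ := (hfrob₂ y z a b).mpr ⟨u, h2, h1⟩
          exact ⟨c, hc2, hc1⟩)
      (fun a b y z => by
        constructor
        · rintro ⟨c, h1, h2⟩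
          obtain ⟨u, hu1, hu2⟩ := (hfrob₁ y z a b).mp ⟨c, h2, h1⟩
          exact ⟨u, hu2, hu1⟩
        · rintro ⟨v, h1, h2⟩
          obtain ⟨c, hc1, hc2⟩ := (hfrob₁ y z a b).mpr ⟨v, h2, h1⟩
          exact ⟨c, hc2, hc1⟩)
    intro a b hab
    obtain ⟨e, he, hμ⟩ := hab
    exact this a b ⟨e, he, hμ⟩
  intro x y z
  constructor
  · constructor
    · intro hδ
      obtain ⟨r, hr, hx⟩ := (hunitR x x).mpr rfl
      obtain ⟨w, hw1, hw2⟩ := (hfrob₁ x r y z).mp ⟨x, hx, hδ⟩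
      exact ⟨w, C1 w z ⟨r, hr, hw1⟩, hw2⟩
    · rintro ⟨w, hβ, hμ⟩
      obtain ⟨r, hr, hγ⟩ := C2 z w hβ
      obtain ⟨c, hc1, hc2⟩ := (hfrob₁ x r y z).mpr ⟨w, hγ, hμ⟩
      have : x = c := (hunitR x c).mp ⟨r, hr, hc1⟩
      rw [this]; exact hc2
  · constructor
    · intro hδ
      obtain ⟨r, hr, hx⟩ := (hunitL x x).mpr rfl
      obtain ⟨w, hw1, hw2⟩ := (hfrob₂ r x y z).mp ⟨x, hx, hδ⟩
      exact ⟨w, C1 y w ⟨r, hr, hw1⟩, hw2⟩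
    · rintro ⟨w, hβ, hμ⟩
      obtain ⟨r, hr, hγ⟩ := C2 w y hβ
      obtain ⟨c, hc1, hc2⟩ := (hfrob₂ r x y z).mpr ⟨w, hγ, hμ⟩
      have : x = c := (hunitL x c).mp ⟨r, hr, hc1⟩
      rw [this]; exact hc2
end

section
/- Let (X₁;μ₁,η₁,δ₁,ε₁) and (X₂;μ₂,η₂,δ₂,ε₂) be Frobenius algebras in Rel, and let h : X₁ → X₂ be a map such that: (a) a ∈ η₁ implies h(a) ∈ η₂; (b) μ₁:(a,b)↦c implies μ₂:(h(a),h(b))↦h(c); (c) e ∈ ε₁ implies h(e) ∈ ε₂. Then h also preserves comultiplication: δ₁:a↦(b,c) implies δ₂:h(a)↦(h(b),h(c)). In other words, a monoid homomorphism preserving counit elements is a Frobenius algebra homomorphism. -/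
/-- Auxiliary: in any Frobenius algebra in Rel, the comultiplication is
positively definable from the multiplication and the counit set:
`δ a y z ↔ ∃ u, (∃ e ∈ ε, μ z u e) ∧ μ a u y`. -/
theorem relFrobenius_delta_eq
    {X : Type*} (μ δ : X → X → X → Prop) (η ε : Set X)
    (hunitL : ∀ a b : X, (∃ r ∈ η, μ r a b) ↔ a = b)
    (hunitR : ∀ a b : X, (∃ r ∈ η, μ a r b) ↔ a = b)
    (hcounitL : ∀ a b : X, (∃ e ∈ ε, δ a e b) ↔ a = b)
    (hcounitR : ∀ a b : X, (∃ e ∈ ε, δ a b e) ↔ a = b)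
    (hfrob₁ : ∀ a b y z : X,
      (∃ c, μ a b c ∧ δ c y z) ↔ (∃ u, δ b u z ∧ μ a u y))
    (hfrob₂ : ∀ a b y z : X,
      (∃ c, μ a b c ∧ δ c y z) ↔ (∃ v, δ a y v ∧ μ v b z)) :
    ∀ a y z : X, δ a y z ↔ ∃ u, (∃ e ∈ ε, μ z u e) ∧ μ a u y := by
  have hA : ∀ a b y : X, μ a b y ↔ ∃ v, δ a y v ∧ ∃ e ∈ ε, μ v b e := by
    intro a b y
    constructor
    · intro hm
      obtain ⟨e, he, hd⟩ := (hcounitR y y).mpr rfl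
      obtain ⟨v, hv1, hv2⟩ := (hfrob₂ a b y e).mp ⟨y, hm, hd⟩
      exact ⟨v, hv1, e, he, hv2⟩
    · rintro ⟨v, hv1, e, he, hv2⟩
      obtain ⟨c, hc1, hc2⟩ := (hfrob₂ a b y e).mpr ⟨v, hv1, hv2⟩
      have hcy : c = y := (hcounitR c y).mp ⟨e, he, hc2⟩
      exact hcy ▸ hc1
  have hB : ∀ a b z : X, μ a b z ↔ ∃ u, δ b u z ∧ ∃ e ∈ ε, μ a u e := by
    intro a b z
    constructor
    · intro hm
      obtain ⟨e, he, hd⟩ := (hcounitL z z).mpr rfl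
      obtain ⟨u, hu1, hu2⟩ := (hfrob₁ a b e z).mp ⟨z, hm, hd⟩
      exact ⟨u, hu1, e, he, hu2⟩
    · rintro ⟨u, hu1, e, he, hu2⟩
      obtain ⟨c, hc1, hc2⟩ := (hfrob₁ a b e z).mpr ⟨u, hu1, hu2⟩
      have hcz : c = z := (hcounitL c z).mp ⟨e, he, hc2⟩
      exact hcz ▸ hc1
  have hstar : ∀ a y z : X, δ a y z ↔ ∃ u, (∃ r ∈ η, δ r u z) ∧ μ a u y := by
    intro a y z
    constructor
    · intro hd
      obtain ⟨r, hr, hm⟩ := (hunitR a a).mpr rfl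
      obtain ⟨u, hu1, hu2⟩ := (hfrob₁ a r y z).mp ⟨a, hm, hd⟩
      exact ⟨u, ⟨r, hr, hu1⟩, hu2⟩
    · rintro ⟨u, ⟨r, hr, hu1⟩, hu2⟩
      obtain ⟨c, hc1, hc2⟩ := (hfrob₁ a r y z).mpr ⟨u, hu1, hu2⟩
      have hac : a = c := (hunitR a c).mp ⟨r, hr, hc1⟩
      subst hac
      exact hc2
  have S1 : ∀ a z : X,
      (∃ u, (∃ r ∈ η, δ r u z) ∧ ∃ e ∈ ε, μ a u e) ↔ a = z := by
    intro a z
    constructor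
    · rintro ⟨u, ⟨r, hr, hd⟩, e, he, hm⟩
      have hm' : μ a r z := (hB a r z).mpr ⟨u, hd, e, he, hm⟩
      exact (hunitR a z).mp ⟨r, hr, hm'⟩
    · rintro rfl
      obtain ⟨r, hr, hm⟩ := (hunitR a a).mpr rfl
      obtain ⟨u, hu1, hu2⟩ := (hB a r a).mp hm
      exact ⟨u, ⟨r, hr, hu1⟩, hu2⟩
  have S2 : ∀ y b : X,
      (∃ v, (∃ r ∈ η, δ r y v) ∧ ∃ e ∈ ε, μ v b e) ↔ b = y := by
    intro y b
    constructor
    · rintro ⟨v, ⟨r, hr, hd⟩, e, he, hm⟩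
      have hm' : μ r b y := (hA r b y).mpr ⟨v, hd, e, he, hm⟩
      exact (hunitL b y).mp ⟨r, hr, hm'⟩
    · rintro rfl
      obtain ⟨r, hr, hm⟩ := (hunitL b b).mpr rfl
      obtain ⟨v, hv1, hv2⟩ := (hA r b b).mp hm
      exact ⟨v, ⟨r, hr, hv1⟩, hv2⟩
  have cup_to_cap : ∀ u z : X, (∃ r ∈ η, δ r u z) → ∃ e ∈ ε, μ z u e := by
    intro u z hcup
    obtain ⟨u', hcup', hcap'⟩ := (S1 z z).mpr rfl
    have huu : u' = u := (S2 u u').mp ⟨z, hcup, hcap'⟩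
    exact huu ▸ hcap'
  have cap_to_cup : ∀ a u : X, (∃ e ∈ ε, μ a u e) → ∃ r ∈ η, δ r u a := by
    intro a u hcap
    obtain ⟨v, hcup', hcap'⟩ := (S2 u u).mpr rfl
    have hav : a = v := (S1 a v).mp ⟨u, hcup', hcap⟩
    exact hav ▸ hcup'
  intro a y z
  rw [hstar a y z]
  constructor
  · rintro ⟨u, hcup, hm⟩
    exact ⟨u, cup_to_cap u z hcup, hm⟩
  · rintro ⟨u, hcap, hm⟩
    exact ⟨u, cap_to_cup z u hcap, hm⟩



/-- a monoid homomorphism between Frobenius algebras in Rel which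
preserves counit elements also preserves the comultiplication δ, hence is a
Frobenius algebra homomorphism. -/
theorem relFrobenius_hom_preserves_delta
    {X₁ X₂ : Type*}
    (μ₁ δ₁ : X₁ → X₁ → X₁ → Prop) (η₁ ε₁ : Set X₁)
    (μ₂ δ₂ : X₂ → X₂ → X₂ → Prop) (η₂ ε₂ : Set X₂)
    -- X₁ is a Frobenius algebra in Rel
    (hassoc₁ : ∀ a b c d : X₁,
      (∃ x, μ₁ a b x ∧ μ₁ x c d) ↔ (∃ y, μ₁ b c y ∧ μ₁ a y d))
    (hunitL₁ : ∀ a b : X₁, (∃ r ∈ η₁, μ₁ r a b) ↔ a = b)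
    (hunitR₁ : ∀ a b : X₁, (∃ r ∈ η₁, μ₁ a r b) ↔ a = b)
    (hcoassoc₁ : ∀ a x y z : X₁,
      (∃ u, δ₁ a u z ∧ δ₁ u x y) ↔ (∃ v, δ₁ a x v ∧ δ₁ v y z))
    (hcounitL₁ : ∀ a b : X₁, (∃ e ∈ ε₁, δ₁ a e b) ↔ a = b)
    (hcounitR₁ : ∀ a b : X₁, (∃ e ∈ ε₁, δ₁ a b e) ↔ a = b)
    (hfrob₁₁ : ∀ a b y z : X₁,
      (∃ c, μ₁ a b c ∧ δ₁ c y z) ↔ (∃ u, δ₁ b u z ∧ μ₁ a u y))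
    (hfrob₂₁ : ∀ a b y z : X₁,
      (∃ c, μ₁ a b c ∧ δ₁ c y z) ↔ (∃ v, δ₁ a y v ∧ μ₁ v b z))
    -- X₂ is a Frobenius algebra in Rel
    (hassoc₂ : ∀ a b c d : X₂,
      (∃ x, μ₂ a b x ∧ μ₂ x c d) ↔ (∃ y, μ₂ b c y ∧ μ₂ a y d))
    (hunitL₂ : ∀ a b : X₂, (∃ r ∈ η₂, μ₂ r a b) ↔ a = b)
    (hunitR₂ : ∀ a b : X₂, (∃ r ∈ η₂, μ₂ a r b) ↔ a = b)
    (hcoassoc₂ : ∀ a x y z : X₂,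
      (∃ u, δ₂ a u z ∧ δ₂ u x y) ↔ (∃ v, δ₂ a x v ∧ δ₂ v y z))
    (hcounitL₂ : ∀ a b : X₂, (∃ e ∈ ε₂, δ₂ a e b) ↔ a = b)
    (hcounitR₂ : ∀ a b : X₂, (∃ e ∈ ε₂, δ₂ a b e) ↔ a = b)
    (hfrob₁₂ : ∀ a b y z : X₂,
      (∃ c, μ₂ a b c ∧ δ₂ c y z) ↔ (∃ u, δ₂ b u z ∧ μ₂ a u y))
    (hfrob₂₂ : ∀ a b y z : X₂,
      (∃ c, μ₂ a b c ∧ δ₂ c y z) ↔ (∃ v, δ₂ a y v ∧ μ₂ v b z))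
    -- h is a monoid homomorphism preserving counit elements
    (h : X₁ → X₂)
    (hη : ∀ a : X₁, a ∈ η₁ → h a ∈ η₂)
    (hμ : ∀ a b c : X₁, μ₁ a b c → μ₂ (h a) (h b) (h c))
    (hε : ∀ e : X₁, e ∈ ε₁ → h e ∈ ε₂) :
    ∀ a b c : X₁, δ₁ a b c → δ₂ (h a) (h b) (h c) := by
  intro a b c hd
  obtain ⟨u, ⟨e, he, hce⟩, hab⟩ :=
    (relFrobenius_delta_eq μ₁ δ₁ η₁ ε₁ hunitL₁ hunitR₁ hcounitL₁ hcounitR₁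
      hfrob₁₁ hfrob₂₁ a b c).mp hd
  exact (relFrobenius_delta_eq μ₂ δ₂ η₂ ε₂ hunitL₂ hunitR₂ hcounitL₂ hcounitR₂
      hfrob₁₂ hfrob₂₂ (h a) (h b) (h c)).mpr
    ⟨h u, ⟨h e, hε e he, hμ c u e hce⟩, hμ a u b hab⟩
end

section
/- Let X be a set with ternary relations μ (write μ:(a,b)↦c) and δ (write δ:a↦(b,c)) and subsets η, ε ⊆ X satisfying: the unit law (for all a,b, (∃r∈η, μ:(r,a)↦b) iff a=b, and (∃r∈η, μ:(a,r)↦b) iff a=b), the counit law (for all a,b, (∃e∈ε, δ:a↦(e,b)) iff a=b, and (∃e∈ε, δ:a↦(b,e)) iff a=b), and the Frobenius identity (for all a,b,y,z, the statements (∃c, μ:(a,b)↦c and δ:c↦(y,z)), (∃u, δ:b↦(u,z) and μ:(a,u)↦y), (∃v, δ:a↦(y,v) and μ:(v,b)↦z) are pairwise equivalent). Then μ is associative, i.e., for all a,b,c,d, (∃x, μ:(a,b)↦x and μ:(x,c)↦d) iff (∃y, μ:(b,c)↦y and μ:(a,y)↦d), and δ is coassociative, i.e., for all a,x,y,z, (∃u,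 δ:a↦(u,z) and δ:u↦(x,y)) iff (∃v, δ:a↦(x,v) and δ:v↦(y,z)). -/
/-- the unit law, the counit law and the Frobenius identity
together imply associativity of μ and coassociativity of δ. -/
theorem relFrobenius_assoc_of_frobId
    {X : Type*} (μ δ : X → X → X → Prop) (η ε : Set X)
    (hunitL : ∀ a b : X, (∃ r ∈ η, μ r a b) ↔ a = b)
    (hunitR : ∀ a b : X, (∃ r ∈ η, μ a r b) ↔ a = b)
    (hcounitL : ∀ a b : X, (∃ e ∈ ε, δ a e b) ↔ a = b)
    (hcounitR : ∀ a b : X, (∃ e ∈ ε, δ a b e) ↔ a = b)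
    (hfrob₁ : ∀ a b y z : X,
      (∃ c, μ a b c ∧ δ c y z) ↔ (∃ u, δ b u z ∧ μ a u y))
    (hfrob₂ : ∀ a b y z : X,
      (∃ c, μ a b c ∧ δ c y z) ↔ (∃ v, δ a y v ∧ μ v b z)) :
    (∀ a b c d : X,
      (∃ x, μ a b x ∧ μ x c d) ↔ (∃ y, μ b c y ∧ μ a y d)) ∧
    (∀ a x y z : X,
      (∃ u, δ a u z ∧ δ u x y) ↔ (∃ v, δ a x v ∧ δ v y z)) := by
  constructor
  · intro a b c d
    constructor
    · rintro ⟨x, hab, hxcd⟩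
      obtain ⟨e, he, hd⟩ := (hcounitR d d).2 rfl
      obtain ⟨v, hxv, hvce⟩ := (hfrob₂ x c d e).1 ⟨d, hxcd, hd⟩
      obtain ⟨u, hbu, haud⟩ := (hfrob₁ a b d v).1 ⟨x, hab, hxv⟩
      obtain ⟨c', hbc', hc'⟩ := (hfrob₂ b c u e).2 ⟨v, hbu, hvce⟩
      have hcu : c' = u := (hcounitR c' u).1 ⟨e, he, hc'⟩
      exact ⟨u, by rw [← hcu]; exact hbc', haud⟩
    · rintro ⟨y, hbcy, hayd⟩
      obtain ⟨e, he, hde⟩ := (hcounitL d d).2 rfl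
      obtain ⟨u, hyu, haue⟩ := (hfrob₁ a y e d).1 ⟨d, hayd, hde⟩
      obtain ⟨v, hbuv, hvcd⟩ := (hfrob₂ b c u d).1 ⟨y, hbcy, hyu⟩
      obtain ⟨x, habx, hxev⟩ := (hfrob₁ a b e v).2 ⟨u, hbuv, haue⟩
      have hxv : x = v := (hcounitL x v).1 ⟨e, he, hxev⟩
      exact ⟨v, by rw [← hxv]; exact habx, hvcd⟩
  · intro a x y z
    constructor
    · rintro ⟨u, hauz, huxy⟩
      obtain ⟨r, hr, hara⟩ := (hunitR a a).2 rfl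
      obtain ⟨w, hrwz, hawu⟩ := (hfrob₁ a r u z).1 ⟨a, hara, hauz⟩
      obtain ⟨v, haxv, hvwy⟩ := (hfrob₂ a w x y).1 ⟨u, hawu, huxy⟩
      obtain ⟨c', hvrc', hc'yz⟩ := (hfrob₁ v r y z).2 ⟨w, hrwz, hvwy⟩
      have hv : v = c' := (hunitR v c').1 ⟨r, hr, hvrc'⟩
      exact ⟨v, haxv, by rw [hv]; exact hc'yz⟩
    · rintro ⟨v, haxv, hvyz⟩
      obtain ⟨r, hr, hraa⟩ := (hunitL a a).2 rfl
      obtain ⟨v', hrxv', hv'av⟩ := (hfrob₂ r a x v).1 ⟨a, hraa, haxv⟩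
      obtain ⟨u, hauz, hv'uy⟩ := (hfrob₁ v' a y z).1 ⟨v, hv'av, hvyz⟩
      obtain ⟨c', hruc', hc'xy⟩ := (hfrob₂ r u x y).2 ⟨v', hrxv', hv'uy⟩
      have hu : u = c' := (hunitL u c').1 ⟨r, hr, hruc'⟩
      exact ⟨u, hauz, by rw [hu]; exact hc'xy⟩
end

section
/- Let (X;μ,η) be a monoid in Rel. Then μ has the cancellation property in the first coordinate (for all a₁,a₂,b,c ∈ X, μ:(a₁,b)↦c and μ:(a₂,b)↦c imply a₁ = a₂) if and only if the following Λ₀³-filling condition holds: for all a,b,c,d,e,f ∈ X, if μ:(b,a)↦e, μ:(c,e)↦d and μ:(f,a)↦d, then μ:(c,b)↦f. -/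
/-- in a monoid in Rel, μ has the cancellation property in the
first coordinate iff the nerve admits fillings of Λ₀³-horns. -/
theorem relMonoid_left_cancellation_iff_horn_zero_three
    {X : Type*} (μ : X → X → X → Prop) (η : Set X)
    (hassoc : ∀ a b c d : X,
      (∃ x, μ a b x ∧ μ x c d) ↔ (∃ y, μ b c y ∧ μ a y d))
    (hunitL : ∀ a b : X, (∃ r ∈ η, μ r a b) ↔ a = b)
    (hunitR : ∀ a b : X, (∃ r ∈ η, μ a r b) ↔ a = b) :
    (∀ a₁ a₂ b c : X, μ a₁ b c → μ a₂ b c → a₁ = a₂) ↔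
    (∀ a b c d e f : X, μ b a e → μ c e d → μ f a d → μ c b f) := by
  constructor
  · intro hcanc a b c d e f hba hce hfa
    obtain ⟨x, hcbx, hxad⟩ := (hassoc c b a d).mpr ⟨e, hba, hce⟩
    rwa [hcanc x f a d hxad hfa] at hcbx
  · intro hhorn a₁ a₂ b c h1 h2
    obtain ⟨r, hr, hrb⟩ := (hunitL b b).mpr rfl
    exact (hunitR a₁ a₂).mp ⟨r, hr, hhorn b r a₁ c b a₂ hrb h1 h2⟩
end

section
/- Let (X;μ,η) be a monoid in Rel. Then μ has the cancellation property in the second coordinate (for all a,b₁,b₂,c ∈ X, μ:(a,b₁)↦c and μ:(a,b₂)↦c imply b₁ = b₂) if and only if the following Λ₃³-filling condition holds: for all a,b,c,d,e,f ∈ X, if μ:(c,b)↦f, μ:(c,e)↦d and μ:(f,a)↦d, then μ:(b,a)↦e. -/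
/-- in a monoid in Rel, μ has the cancellation property in the
second coordinate iff the nerve admits fillings of Λ₃³-horns. -/
theorem relMonoid_right_cancellation_iff_horn_three_three
    {X : Type*} (μ : X → X → X → Prop) (η : Set X)
    (hassoc : ∀ a b c d : X,
      (∃ x, μ a b x ∧ μ x c d) ↔ (∃ y, μ b c y ∧ μ a y d))
    (hunitL : ∀ a b : X, (∃ r ∈ η, μ r a b) ↔ a = b)
    (hunitR : ∀ a b : X, (∃ r ∈ η, μ a r b) ↔ a = b) :
    (∀ a b₁ b₂ c : X, μ a b₁ c → μ a b₂ c → b₁ = b₂) ↔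
    (∀ a b c d e f : X, μ c b f → μ c e d → μ f a d → μ b a e) := by
  constructor
  · intro hcanc a b c d e f hcbf hced hfad
    obtain ⟨y, hy1, hy2⟩ := (hassoc c b a d).mp ⟨f, hcbf, hfad⟩
    rwa [hcanc c y e d hy2 hced] at hy1
  · intro horn a b₁ b₂ c hab₁ hab₂
    obtain ⟨r, hr, hcrc⟩ := (hunitR c c).mpr rfl
    exact (hunitR b₁ b₂).mp ⟨r, hr, horn r b₁ a c b₂ c hab₁ hab₂ hcrc⟩
end

section
/- Let (X;μ,η) be a monoid in Rel. Then μ is a partial operation (for all a,b,c₁,c₂ ∈ X, μ:(a,b)↦c₁ and μ:(a,b)↦c₂ imply c₁ = c₂) if and only if the following Λ₁³-filling condition holds: for all a,b,c,d,e,f ∈ X, if μ:(c,b)↦f, μ:(f,a)↦d and μ:(b,a)↦e, then μ:(c,e)↦d. -/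
/-- in a monoid in Rel, μ is a partial operation iff the nerve
admits fillings of Λ₁³-horns. -/
theorem relMonoid_partial_iff_horn_one_three
    {X : Type*} (μ : X → X → X → Prop) (η : Set X)
    (hassoc : ∀ a b c d : X,
      (∃ x, μ a b x ∧ μ x c d) ↔ (∃ y, μ b c y ∧ μ a y d))
    (hunitL : ∀ a b : X, (∃ r ∈ η, μ r a b) ↔ a = b)
    (hunitR : ∀ a b : X, (∃ r ∈ η, μ a r b) ↔ a = b) :
    (∀ a b c₁ c₂ : X, μ a b c₁ → μ a b c₂ → c₁ = c₂) ↔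
    (∀ a b c d e f : X, μ c b f → μ f a d → μ b a e → μ c e d) := by
  constructor
  · intro hpart a b c d e f hcbf hfad hbae
    obtain ⟨y, hy1, hy2⟩ := (hassoc c b a d).mp ⟨f, hcbf, hfad⟩
    rwa [hpart b a y e hy1 hbae] at hy2
  · intro hhorn a b c₁ c₂ h1 h2
    obtain ⟨r, hr, hra⟩ := (hunitL a a).mpr rfl
    have : μ r c₂ c₁ := hhorn b a r c₁ c₂ a hra h1 h2
    exact ((hunitL c₂ c₁).mp ⟨r, hr, this⟩).symm
end

section
/- Let (X;μ,η) be a monoid in Rel. Then μ is a partial operation (for all a,b,c₁,c₂ ∈ X, μ:(a,b)↦c₁ and μ:(a,b)↦c₂ imply c₁ = c₂) if and only if the following Λ₂³-filling condition holds: for all a,b,c,d,e,f ∈ X, if μ:(c,b)↦f, μ:(c,e)↦d and μ:(b,a)↦e, then μ:(f,a)↦d. -/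
/-- in a monoid in Rel, μ is a partial operation iff the nerve
admits fillings of Λ₂³-horns. -/
theorem relMonoid_partial_iff_horn_two_three
    {X : Type*} (μ : X → X → X → Prop) (η : Set X)
    (hassoc : ∀ a b c d : X,
      (∃ x, μ a b x ∧ μ x c d) ↔ (∃ y, μ b c y ∧ μ a y d))
    (hunitL : ∀ a b : X, (∃ r ∈ η, μ r a b) ↔ a = b)
    (hunitR : ∀ a b : X, (∃ r ∈ η, μ a r b) ↔ a = b) :
    (∀ a b c₁ c₂ : X, μ a b c₁ → μ a b c₂ → c₁ = c₂) ↔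
    (∀ a b c d e f : X, μ c b f → μ c e d → μ b a e → μ f a d) := by
  constructor
  · intro hp a b c d e f hcbf hced hbae
    obtain ⟨x, hcbx, hxad⟩ := (hassoc c b a d).mpr ⟨e, hbae, hced⟩
    exact (hp c b f x hcbf hcbx) ▸ hxad
  · intro hh a b c₁ c₂ h1 h2
    obtain ⟨r, hr, hbrb⟩ := (hunitR b b).mpr rfl
    exact (hunitR c₁ c₂).mp ⟨r, hr, hh r b a c₂ b c₁ h1 h2 hbrb⟩
end

section
/- Let (X;μ,η,δ,ε) be a Frobenius algebra in Rel. Then for all a,e,r ∈ X with e ∈ ε, r ∈ η, μ:(r,a)↦a and μ:(r,e)↦e (i.e., a and e have the same target), there exists a unique x ∈ X with μ:(a,x)↦e. (This is the unique filling of ε-horns ε-Λ₂² in the nerve of the Frobenius algebra.) -/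
/-- unique filling of ε-horns ε-Λ₂² in the nerve of a Frobenius
algebra: if e ∈ ε, r ∈ η, and a and e have the same target r, then there is a
unique x with μ:(a,x)↦e. -/
theorem relFrobenius_eps_horn_two_top
    {X : Type*} (μ δ : X → X → X → Prop) (η ε : Set X)
    (hassoc : ∀ a b c d : X,
      (∃ x, μ a b x ∧ μ x c d) ↔ (∃ y, μ b c y ∧ μ a y d))
    (hunitL : ∀ a b : X, (∃ r ∈ η, μ r a b) ↔ a = b)
    (hunitR : ∀ a b : X, (∃ r ∈ η, μ a r b) ↔ a = b)
    (hcoassoc : ∀ a x y z : X,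
      (∃ u, δ a u z ∧ δ u x y) ↔ (∃ v, δ a x v ∧ δ v y z))
    (hcounitL : ∀ a b : X, (∃ e ∈ ε, δ a e b) ↔ a = b)
    (hcounitR : ∀ a b : X, (∃ e ∈ ε, δ a b e) ↔ a = b)
    (hfrob₁ : ∀ a b y z : X,
      (∃ c, μ a b c ∧ δ c y z) ↔ (∃ u, δ b u z ∧ μ a u y))
    (hfrob₂ : ∀ a b y z : X,
      (∃ c, μ a b c ∧ δ c y z) ↔ (∃ v, δ a y v ∧ μ v b z)) :
    ∀ a e r : X, e ∈ ε → r ∈ η → μ r a a → μ r e e →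
      ∃! x : X, μ a x e := by
  intro a e r he hr hra hre
  -- Step 1: δ e e e₁ for some e₁ ∈ ε (counit on the right).
  obtain ⟨e₁, he₁, hde⟩ : ∃ e₁ ∈ ε, δ e e e₁ := (hcounitR e e).mpr rfl
  -- Step 2: obtain w with δ r e w via Frobenius₂.
  obtain ⟨w, hrw, -⟩ : ∃ w, δ r e w ∧ μ w e e₁ :=
    (hfrob₂ r e e e₁).mp ⟨e, hre, hde⟩
  -- Step 3: w = r by the left counit law.
  have hwr : r = w := (hcounitL r w).mp ⟨e, he, hrw⟩
  subst hwr
  -- Step 4: δ a e a via Frobenius₂.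
  obtain ⟨c, hc1, hc2⟩ : ∃ c, μ r a c ∧ δ c e a :=
    (hfrob₂ r a e a).mpr ⟨r, hrw, hra⟩
  have hca : a = c := (hunitL a c).mp ⟨r, hr, hc1⟩
  subst hca
  -- Step 5: right unit for a.
  obtain ⟨r', hr', har'⟩ : ∃ r' ∈ η, μ a r' a := (hunitR a a).mpr rfl
  -- Step 6: existence via Frobenius₁.
  obtain ⟨x, -, hx⟩ : ∃ u, δ r' u a ∧ μ a u e :=
    (hfrob₁ a r' e a).mp ⟨a, har', hc2⟩
  refine ⟨x, hx, ?_⟩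
  -- Uniqueness: suffices to show any two fillers are equal; we show every
  -- filler x' equals any filler y'. We prove: for all x' y', μ a x' e →
  -- μ a y' e → y' = x'.
  have key : ∀ x' y' : X, μ a x' e → μ a y' e → y' = x' := by
    intro x' y' hx' hy'
    -- δ e e₀ e for some e₀ ∈ ε (left counit on e).
    obtain ⟨e₀, he₀, hde₀⟩ : ∃ e₀ ∈ ε, δ e e₀ e := (hcounitL e e).mpr rfl
    -- δ x' x' e via Frobenius₁.
    obtain ⟨u, hu1, -⟩ : ∃ u, δ x' u e ∧ μ a u e₀ :=
      (hfrob₁ a x' e₀ e).mp ⟨e, hx', hde₀⟩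
    have hux' : x' = u := (hcounitR x' u).mp ⟨e, he, hu1⟩
    subst hux'
    -- left unit for x'.
    obtain ⟨r₂, hr₂, hr₂x'⟩ : ∃ r₂ ∈ η, μ r₂ x' x' := (hunitL x' x').mpr rfl
    -- δ r₂ x' v with μ v x' e, via Frobenius₂.
    obtain ⟨v, hv1, -⟩ : ∃ v, δ r₂ x' v ∧ μ v x' e :=
      (hfrob₂ r₂ x' x' e).mp ⟨x', hr₂x', hu1⟩
    -- v = a via Frobenius₁ and units/counits.
    obtain ⟨c', hc'1, hc'2⟩ : ∃ c', μ a r₂ c' ∧ δ c' e v :=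
      (hfrob₁ a r₂ e v).mpr ⟨x', hv1, hx'⟩
    have hca' : a = c' := (hunitR a c').mp ⟨r₂, hr₂, hc'1⟩
    subst hca'
    have hav : a = v := (hcounitL a v).mp ⟨e, he, hc'2⟩
    subst hav
    -- Now δ r₂ x' a and μ a y' e; Frobenius₂ gives δ y' x' e, hence y' = x'.
    obtain ⟨c'', hc''1, hc''2⟩ : ∃ c'', μ r₂ y' c'' ∧ δ c'' x' e :=
      (hfrob₂ r₂ y' x' e).mpr ⟨a, hv1, hy'⟩
    have hyc : y' = c'' := (hunitL y' c'').mp ⟨r₂, hr₂, hc''1⟩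
    subst hyc
    exact (hcounitR y' x').mp ⟨e, he, hc''2⟩
  intro y' hy'
  exact key x y' hx hy'
end

section
/- Let (X;μ,η,δ,ε) be a Frobenius algebra in Rel. Then for all a,b,c,x,y,e ∈ X, if e ∈ ε, μ:(c,x)↦e, μ:(y,a)↦e and μ:(b,a)↦x, then μ:(c,b)↦y. (This is the filling of ε-horns ε-Λ₀³ in the nerve of the Frobenius algebra: the 3-simplex has edges a:0→1, b:1→2, c:2→3, x:0→2, y:1→3 and marked edge e:0→3, and the conclusion is the missing face opposite to vertex 0.) -/
/-- filling of ε-horns ε-Λ₀³ in the nerve of a Frobenius algebra: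
if e ∈ ε, μ:(c,x)↦e, μ:(y,a)↦e and μ:(b,a)↦x, then μ:(c,b)↦y. -/
theorem relFrobenius_eps_horn_three_zero
    {X : Type*} (μ δ : X → X → X → Prop) (η ε : Set X)
    (hassoc : ∀ a b c d : X,
      (∃ x, μ a b x ∧ μ x c d) ↔ (∃ y, μ b c y ∧ μ a y d))
    (hunitL : ∀ a b : X, (∃ r ∈ η, μ r a b) ↔ a = b)
    (hunitR : ∀ a b : X, (∃ r ∈ η, μ a r b) ↔ a = b)
    (hcoassoc : ∀ a x y z : X,
      (∃ u, δ a u z ∧ δ u x y) ↔ (∃ v, δ a x v ∧ δ v y z))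
    (hcounitL : ∀ a b : X, (∃ e ∈ ε, δ a e b) ↔ a = b)
    (hcounitR : ∀ a b : X, (∃ e ∈ ε, δ a b e) ↔ a = b)
    (hfrob₁ : ∀ a b y z : X,
      (∃ c, μ a b c ∧ δ c y z) ↔ (∃ u, δ b u z ∧ μ a u y))
    (hfrob₂ : ∀ a b y z : X,
      (∃ c, μ a b c ∧ δ c y z) ↔ (∃ v, δ a y v ∧ μ v b z)) :
    ∀ a b c x y e : X, e ∈ ε → μ c x e → μ y a e → μ b a x → μ c b y := by
  intro a b c x y e he hcx hya hba
  -- Step 1: associativity gives t with μ c b t and μ t a e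
  obtain ⟨t, hcbt, htae⟩ := (hassoc c b a e).mpr ⟨x, hba, hcx⟩
  -- Step 2: a left unit r for a, and a right counit witness s for a
  obtain ⟨r, hr, hraa⟩ := (hunitL a a).mpr rfl
  obtain ⟨s, hs, hdaas⟩ := (hcounitR a a).mpr rfl
  -- Step 3: Frobenius₂ on (r,a,a,s) gives p with δ r a p and μ p a s
  obtain ⟨p, hdrap, _⟩ := (hfrob₂ r a a s).mp ⟨a, hraa, hdaas⟩
  -- Step 4: any z with μ z a e equals p
  have key : ∀ z : X, μ z a e → z = p := by
    intro z hzae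
    obtain ⟨d, hzrd, hddep⟩ := (hfrob₁ z r e p).mpr ⟨a, hdrap, hzae⟩
    have hzd : z = d := (hunitR z d).mp ⟨r, hr, hzrd⟩
    have hdp : d = p := (hcounitL d p).mp ⟨e, he, hddep⟩
    exact hzd.trans hdp
  -- Step 5: t = p = y, so μ c b y
  have : t = y := (key t htae).trans (key y hya).symm
  exact this ▸ hcbt
end

section
/- Let (X;μ,η,δ,ε) be a Frobenius algebra in Rel. Then for all a,b,c,x,y,e ∈ X, if e ∈ ε, μ:(c,b)↦y, μ:(c,x)↦e and μ:(y,a)↦e, then μ:(b,a)↦x. (This is the filling of ε-horns ε-Λ₃³ in the nerve of the Frobenius algebra: the 3-simplex has edges a:0→1, b:1→2, c:2→3, x:0→2, y:1→3 and marked edge e:0→3, and the conclusion is the missing face opposite to vertex 3.) -/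
/-- filling of ε-horns ε-Λ₃³ in the nerve of a Frobenius algebra:
if e ∈ ε, μ:(c,b)↦y, μ:(c,x)↦e and μ:(y,a)↦e, then μ:(b,a)↦x. -/
theorem relFrobenius_eps_horn_three_top
    {X : Type*} (μ δ : X → X → X → Prop) (η ε : Set X)
    (hassoc : ∀ a b c d : X,
      (∃ x, μ a b x ∧ μ x c d) ↔ (∃ y, μ b c y ∧ μ a y d))
    (hunitL : ∀ a b : X, (∃ r ∈ η, μ r a b) ↔ a = b)
    (hunitR : ∀ a b : X, (∃ r ∈ η, μ a r b) ↔ a = b)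
    (hcoassoc : ∀ a x y z : X,
      (∃ u, δ a u z ∧ δ u x y) ↔ (∃ v, δ a x v ∧ δ v y z))
    (hcounitL : ∀ a b : X, (∃ e ∈ ε, δ a e b) ↔ a = b)
    (hcounitR : ∀ a b : X, (∃ e ∈ ε, δ a b e) ↔ a = b)
    (hfrob₁ : ∀ a b y z : X,
      (∃ c, μ a b c ∧ δ c y z) ↔ (∃ u, δ b u z ∧ μ a u y))
    (hfrob₂ : ∀ a b y z : X,
      (∃ c, μ a b c ∧ δ c y z) ↔ (∃ v, δ a y v ∧ μ v b z)) :
    ∀ a b c x y e : X, e ∈ ε → μ c b y → μ c x e → μ y a e → μ b a x := by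
  intro a b c x y e he hcb hcx hya
  -- Snake identity Z2 (forward): cap(p,q) ∧ cup(q,r) → p = r
  have Z2f : ∀ p q r : X, (∃ e₀ ∈ ε, μ p q e₀) → (∃ r₀ ∈ η, δ r₀ q r) → p = r := by
    rintro p q r ⟨e₀, he₀, hm⟩ ⟨r₀, hr₀, hd⟩
    obtain ⟨d, hmd, hdd⟩ := (hfrob₁ p r₀ e₀ r).mpr ⟨q, hd, hm⟩
    have hpd : p = d := (hunitR p d).mp ⟨r₀, hr₀, hmd⟩
    exact (hcounitL p r).mp ⟨e₀, he₀, hpd ▸ hdd⟩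
  -- Snake identity Z1 (forward): cup(p,q) ∧ cap(q,r) → r = p
  have Z1f : ∀ p q r : X, (∃ r₀ ∈ η, δ r₀ p q) → (∃ e₀ ∈ ε, μ q r e₀) → r = p := by
    rintro p q r ⟨r₀, hr₀, hd⟩ ⟨e₀, he₀, hm⟩
    obtain ⟨d, hmd, hdd⟩ := (hfrob₂ r₀ r p e₀).mpr ⟨q, hd, hm⟩
    have hrd : r = d := (hunitL r d).mp ⟨r₀, hr₀, hmd⟩
    exact (hcounitR r p).mp ⟨e₀, he₀, hrd ▸ hdd⟩
  -- Z1 (backward) at x: there is q₃ with cup(x,q₃) and cap(q₃,x)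
  obtain ⟨r₀, hr₀, hrxx⟩ := (hunitL x x).mpr rfl
  obtain ⟨e₀, he₀, hdxx⟩ := (hcounitR x x).mpr rfl
  obtain ⟨q₃, hcup, hcap⟩ := (hfrob₂ r₀ x x e₀).mp ⟨x, hrxx, hdxx⟩
  -- hcup : δ r₀ x q₃, hcap : μ q₃ x e₀
  -- Z2 forward with cap(c,x) and cup(x,q₃) gives c = q₃, hence cup(x,c)
  have hcq : c = q₃ := Z2f c x q₃ ⟨e, he, hcx⟩ ⟨r₀, hr₀, hcup⟩
  have hcupxc : ∃ r₁ ∈ η, δ r₁ x c := ⟨r₀, hr₀, hcq ▸ hcup⟩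
  -- associativity: there is n with μ b a n and μ c n e
  obtain ⟨n, hban, hcn⟩ := (hassoc c b a e).mp ⟨y, hcb, hya⟩
  -- Z1 forward with cup(x,c) and cap(c,n) gives n = x
  have hnx : n = x := Z1f x c n hcupxc ⟨e, he, hcn⟩
  exact hnx ▸ hban
end

section
/- Let (X;μ,η) be a monoid in Rel and suppose μ:(u,v)↦w for some u,v,w ∈ X. Then w has the same source as v and the same target as u; that is: for every r ∈ η, if μ:(v,r)↦v then μ:(w,r)↦w, and for every r ∈ η, if μ:(r,u)↦u then μ:(r,w)↦w. -/
/-- in a monoid in Rel, if μ:(u,v)↦w, then w has the same source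
as v and the same target as u. -/
theorem relMonoid_product_source_target
    {X : Type*} (μ : X → X → X → Prop) (η : Set X)
    (hassoc : ∀ a b c d : X,
      (∃ x, μ a b x ∧ μ x c d) ↔ (∃ y, μ b c y ∧ μ a y d))
    (hunitL : ∀ a b : X, (∃ r ∈ η, μ r a b) ↔ a = b)
    (hunitR : ∀ a b : X, (∃ r ∈ η, μ a r b) ↔ a = b) :
    ∀ u v w : X, μ u v w →
      (∀ r ∈ η, μ v r v → μ w r w) ∧ (∀ r ∈ η, μ r u u → μ r w w) := by
  intro u v w huv
  constructor
  · intro r hr hvr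
    obtain ⟨x, hx1, hx2⟩ := (hassoc u v r w).mpr ⟨v, hvr, huv⟩
    have : x = w := (hunitR x w).mp ⟨r, hr, hx2⟩
    rwa [this] at hx2
  · intro r hr hru
    obtain ⟨y, hy1, hy2⟩ := (hassoc r u v w).mp ⟨u, hru, huv⟩
    have : y = w := by
      obtain ⟨x, hx1, hx2⟩ := (hassoc r u v y).mp ⟨u, hru, hy1⟩
      exact ((hunitL y w).mp ⟨r, hr, hy2⟩)
    rwa [this] at hy2
end

section
/- Let G be a groupoid. Let X be the set of all morphisms of G, i.e., the sigma type of triples (a, b, f) with a, b objects of G and f : a ⟶ b. Define relations on X as follows: μ:((b₁,c₁,f),(a₂,b₂,g))↦(a₃,c₃,h) holds iff a₂ = a₃, b₂ = b₁, c₁ = c₃ and h = g ≫ f (the composite f ∘ g); η = ε = the set of identity morphisms {(a,a,id_a)}; and δ:h↦(f,g) holds iff μ:(f,g)↦h. Then (X;μ,η,δ,ε) is a Frobenius algebra in Rel, i.e., it satisfies associativity, the unit law, coassociativity, the counit law, and the Frobenius identity. -/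
open CategoryTheory

/-- The set of all morphisms of a groupoid `G`, as a sigma type of triples
`(a, b, f)` with `f : a ⟶ b`. -/
def GroupoidMor (G : Type*) [Groupoid G] : Type _ := Σ (a : G) (b : G), a ⟶ b

/-- The multiplication relation: `μ:(f,g)↦h` iff (with `f : b₁ ⟶ c₁`,
`g : a₂ ⟶ b₂`, `h : a₃ ⟶ c₃`) we have `a₂ = a₃`, `b₂ = b₁`, `c₁ = c₃` and
`h = g ≫ f` (the composite `f ∘ g`), stated using `eqToHom` transports. -/
def groupoidMu {G : Type*} [Groupoid G] (f g h : GroupoidMor G) : Prop :=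
  ∃ (ha : g.1 = h.1) (hb : g.2.1 = f.1) (hc : f.2.1 = h.2.1),
    h.2.2 = eqToHom ha.symm ≫ g.2.2 ≫ eqToHom hb ≫ f.2.2 ≫ eqToHom hc

/-- Unit/counit elements: the identity morphisms `(a, a, 𝟙 a)`. -/
def groupoidEta (G : Type*) [Groupoid G] : Set (GroupoidMor G) :=
  {p | ∃ a : G, p = ⟨a, a, 𝟙 a⟩}

/-- The comultiplication relation: `δ:h↦(f,g)` iff `μ:(f,g)↦h`. -/
def groupoidDelta {G : Type*} [Groupoid G] (h f g : GroupoidMor G) : Prop :=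
  groupoidMu f g h


theorem mu_iff {G : Type*} [Groupoid G] {a1 a2 b1 b2 c1 c2 : G}
    (A : a1 ⟶ a2) (B : b1 ⟶ b2) (C : c1 ⟶ c2) :
    groupoidMu ⟨a1, a2, A⟩ ⟨b1, b2, B⟩ ⟨c1, c2, C⟩ ↔
      ∃ (ha : b1 = c1) (hb : b2 = a1) (hc : a2 = c2),
        C = eqToHom ha.symm ≫ B ≫ eqToHom hb ≫ A ≫ eqToHom hc := Iff.rfl

/-- the morphisms of a groupoid, with μ given by composition,
η = ε = identities, and δ the converse of μ, form a Frobenius algebra in Rel. -/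
theorem groupoid_is_relFrobenius (G : Type*) [Groupoid G] :
    -- associativity
    (∀ a b c d : GroupoidMor G,
      (∃ x, groupoidMu a b x ∧ groupoidMu x c d) ↔
      (∃ y, groupoidMu b c y ∧ groupoidMu a y d)) ∧
    -- unit law
    (∀ a b : GroupoidMor G, (∃ r ∈ groupoidEta G, groupoidMu r a b) ↔ a = b) ∧
    (∀ a b : GroupoidMor G, (∃ r ∈ groupoidEta G, groupoidMu a r b) ↔ a = b) ∧
    -- coassociativity
    (∀ a x y z : GroupoidMor G,
      (∃ u, groupoidDelta a u z ∧ groupoidDelta u x y) ↔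
      (∃ v, groupoidDelta a x v ∧ groupoidDelta v y z)) ∧
    -- counit law
    (∀ a b : GroupoidMor G, (∃ e ∈ groupoidEta G, groupoidDelta a e b) ↔ a = b) ∧
    (∀ a b : GroupoidMor G, (∃ e ∈ groupoidEta G, groupoidDelta a b e) ↔ a = b) ∧
    -- Frobenius identity
    (∀ a b y z : GroupoidMor G,
      ((∃ c, groupoidMu a b c ∧ groupoidDelta c y z) ↔
        (∃ u, groupoidDelta b u z ∧ groupoidMu a u y)) ∧
      ((∃ c, groupoidMu a b c ∧ groupoidDelta c y z) ↔
        (∃ v, groupoidDelta a y v ∧ groupoidMu v b z))) := by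
  refine ⟨?_, ?_, ?_, ?_, ?_, ?_, ?_⟩
  · -- associativity
    rintro ⟨a1, a2, A⟩ ⟨b1, b2, B⟩ ⟨c1, c2, C⟩ ⟨d1, d2, D⟩
    constructor
    · rintro ⟨⟨x1, x2, X⟩, hm1, hm2⟩
      rw [mu_iff] at hm1 hm2
      obtain ⟨rfl, rfl, rfl, rfl⟩ := hm1
      obtain ⟨rfl, rfl, rfl, rfl⟩ := hm2
      exact ⟨⟨_, _, C ≫ B⟩, ⟨rfl, rfl, rfl, by simp⟩, ⟨rfl, rfl, rfl, by simp⟩⟩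
    · rintro ⟨⟨x1, x2, X⟩, hm1, hm2⟩
      rw [mu_iff] at hm1 hm2
      obtain ⟨rfl, rfl, rfl, rfl⟩ := hm1
      obtain ⟨rfl, rfl, rfl, rfl⟩ := hm2
      exact ⟨⟨_, _, B ≫ A⟩, ⟨rfl, rfl, rfl, by simp⟩, ⟨rfl, rfl, rfl, by simp⟩⟩
  · -- left unit
    intro a b
    constructor
    · rintro ⟨r, ⟨w, rfl⟩, hm⟩
      obtain ⟨a1, a2, A⟩ := a
      obtain ⟨b1, b2, B⟩ := b
      rw [mu_iff] at hm
      obtain ⟨rfl, rfl, rfl, rfl⟩ := hm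
      simp
      rfl
    · rintro rfl
      obtain ⟨a1, a2, A⟩ := a
      exact ⟨⟨a2, a2, 𝟙 a2⟩, ⟨a2, rfl⟩, rfl, rfl, rfl, by simp⟩
  · -- right unit
    intro a b
    constructor
    · rintro ⟨r, ⟨w, rfl⟩, hm⟩
      obtain ⟨a1, a2, A⟩ := a
      obtain ⟨b1, b2, B⟩ := b
      rw [mu_iff] at hm
      obtain ⟨rfl, rfl, rfl, rfl⟩ := hm
      simp
      rfl
    · rintro rfl
      obtain ⟨a1, a2, A⟩ := a
      exact ⟨⟨a1, a1, 𝟙 a1⟩, ⟨a1, rfl⟩, rfl, rfl, rfl, by simp⟩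
  · -- coassociativity
    rintro ⟨a1, a2, A⟩ ⟨x1, x2, X⟩ ⟨y1, y2, Y⟩ ⟨z1, z2, Z⟩
    constructor
    · rintro ⟨⟨u1, u2, U⟩, hm1, hm2⟩
      unfold groupoidDelta at hm1 hm2
      rw [mu_iff] at hm1 hm2
      obtain ⟨rfl, rfl, rfl, hA⟩ := hm1
      obtain ⟨rfl, rfl, rfl, rfl⟩ := hm2
      simp only [eqToHom_refl, Category.id_comp, Category.comp_id] at hA
      refine ⟨⟨_, _, Z ≫ Y⟩, ⟨rfl, rfl, rfl, ?_⟩, ⟨rfl, rfl, rfl, by simp⟩⟩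
      simp [hA]
    · rintro ⟨⟨v1, v2, V⟩, hm1, hm2⟩
      unfold groupoidDelta at hm1 hm2
      rw [mu_iff] at hm1 hm2
      obtain ⟨rfl, rfl, rfl, hA⟩ := hm1
      obtain ⟨rfl, rfl, rfl, rfl⟩ := hm2
      simp only [eqToHom_refl, Category.id_comp, Category.comp_id] at hA
      refine ⟨⟨_, _, Y ≫ X⟩, ⟨rfl, rfl, rfl, ?_⟩, ⟨rfl, rfl, rfl, by simp⟩⟩
      simp [hA]
  · -- left counit
    intro a b
    constructor
    · rintro ⟨r, ⟨w, rfl⟩, hm⟩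
      obtain ⟨a1, a2, A⟩ := a
      obtain ⟨b1, b2, B⟩ := b
      unfold groupoidDelta at hm
      rw [mu_iff] at hm
      obtain ⟨rfl, rfl, rfl, hA⟩ := hm
      simp only [eqToHom_refl, Category.id_comp, Category.comp_id] at hA
      simp [hA]
      rfl
    · rintro rfl
      obtain ⟨a1, a2, A⟩ := a
      exact ⟨⟨a2, a2, 𝟙 a2⟩, ⟨a2, rfl⟩, rfl, rfl, rfl, by simp⟩
  · -- right counit
    intro a b
    constructor
    · rintro ⟨r, ⟨w, rfl⟩, hm⟩
      obtain ⟨a1, a2, A⟩ := a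
      obtain ⟨b1, b2, B⟩ := b
      unfold groupoidDelta at hm
      rw [mu_iff] at hm
      obtain ⟨rfl, rfl, rfl, hA⟩ := hm
      simp only [eqToHom_refl, Category.id_comp, Category.comp_id] at hA
      simp [hA]
      rfl
    · rintro rfl
      obtain ⟨a1, a2, A⟩ := a
      exact ⟨⟨a1, a1, 𝟙 a1⟩, ⟨a1, rfl⟩, rfl, rfl, rfl, by simp⟩
  · -- Frobenius identity
    rintro ⟨a1, a2, A⟩ ⟨b1, b2, B⟩ ⟨y1, y2, Y⟩ ⟨z1, z2, Z⟩
    constructor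
    · constructor
      · rintro ⟨⟨c1, c2, C⟩, hm1, hm2⟩
        rw [mu_iff] at hm1
        unfold groupoidDelta at hm2
        rw [mu_iff] at hm2
        obtain ⟨rfl, rfl, rfl, rfl⟩ := hm1
        obtain ⟨rfl, rfl, rfl, hC⟩ := hm2
        simp only [eqToHom_refl, Category.id_comp, Category.comp_id] at hC
        refine ⟨⟨_, _, inv Z ≫ B⟩, ⟨rfl, rfl, rfl, by simp⟩, ⟨rfl, rfl, rfl, ?_⟩⟩
        simp [← hC]
      · rintro ⟨⟨u1, u2, U⟩, hm1, hm2⟩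
        unfold groupoidDelta at hm1
        rw [mu_iff] at hm1
        rw [mu_iff] at hm2
        obtain ⟨rfl, rfl, rfl, rfl⟩ := hm1
        obtain ⟨rfl, rfl, rfl, rfl⟩ := hm2
        exact ⟨⟨_, _, (Z ≫ U) ≫ A⟩, ⟨rfl, rfl, rfl, by simp⟩, ⟨rfl, rfl, rfl, by simp⟩⟩
    · constructor
      · rintro ⟨⟨c1, c2, C⟩, hm1, hm2⟩
        rw [mu_iff] at hm1
        unfold groupoidDelta at hm2
        rw [mu_iff] at hm2
        obtain ⟨rfl, rfl, rfl, rfl⟩ := hm1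
        obtain ⟨rfl, rfl, rfl, hC⟩ := hm2
        simp only [eqToHom_refl, Category.id_comp, Category.comp_id] at hC
        refine ⟨⟨_, _, A ≫ inv Y⟩, ⟨rfl, rfl, rfl, by simp⟩, ⟨rfl, rfl, rfl, ?_⟩⟩
        simp only [eqToHom_refl, Category.id_comp, Category.comp_id]
        rw [← Category.assoc, hC]; simp
      · rintro ⟨⟨v1, v2, V⟩, hm1, hm2⟩
        unfold groupoidDelta at hm1
        rw [mu_iff] at hm1
        rw [mu_iff] at hm2
        obtain ⟨rfl, rfl, rfl, rfl⟩ := hm1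
        obtain ⟨rfl, rfl, rfl, rfl⟩ := hm2
        exact ⟨⟨_, _, B ≫ (V ≫ Y)⟩, ⟨rfl, rfl, rfl, by simp⟩, ⟨rfl, rfl, rfl, by simp⟩⟩
end

section
/- Let E be a set with a ternary relation p (write a⊕b≃c for p(a,b,c)) and distinguished elements 0, 1 ∈ E satisfying: (functionality) a⊕b≃c₁ and a⊕b≃c₂ imply c₁=c₂; (commutativity) a⊕b≃c implies b⊕a≃c; (associativity) for all a,b,c,d, (∃x, a⊕b≃x and x⊕c≃d) iff (∃y, b⊕c≃y and a⊕y≃d); (zero) a⊕0≃a for all a; (orthocomplement) for every a there is a unique a' ∈ E with a⊕a'≃1; (zero-one law) if a⊕1≃b for some b, then a=0. (These are the axioms of an effect algebra.) Define relations on E by: μ:(a,b)↦c iff a⊕b≃c; η = {0}; ε = {1}; and δ:a↦(b,c) iff there exist b', c', u ∈ E with b⊕b'≃1, c⊕c'≃1, b'⊕c'≃u and a⊕u≃1 (i.e., a = (b'⊕c')'). Then (E;μ,η,δ,ε) is a Frobenius algebra in Rel, i.e., it satisfies associativity, the unit law, coassociativity, the counit law, and the Frobenius identity. -/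
/-- an effect algebra (E;⊕,0,1), with μ:(a,b)↦c iff a⊕b≃c,
η = {0}, ε = {1}, and δ:a↦(b,c) iff a = (b'⊕c')', is a Frobenius algebra
in Rel. -/
theorem effectAlgebra_is_relFrobenius
    {E : Type*} (p : E → E → E → Prop) (z o : E)
    -- effect algebra axioms
    (hfun : ∀ a b c₁ c₂ : E, p a b c₁ → p a b c₂ → c₁ = c₂)
    (hcomm : ∀ a b c : E, p a b c → p b a c)
    (hassocEA : ∀ a b c d : E,
      (∃ x, p a b x ∧ p x c d) ↔ (∃ y, p b c y ∧ p a y d))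
    (hzero : ∀ a : E, p a z a)
    (horth : ∀ a : E, ∃! a' : E, p a a' o)
    (hzeroOne : ∀ a b : E, p a o b → a = z) :
    -- the induced structure: μ := p, η := {z}, ε := {o},
    -- δ a b c := ∃ b' c' u, p b b' o ∧ p c c' o ∧ p b' c' u ∧ p a u o
    (∀ a b c d : E,
      (∃ x, p a b x ∧ p x c d) ↔ (∃ y, p b c y ∧ p a y d)) ∧
    -- unit law
    (∀ a b : E, (∃ r ∈ ({z} : Set E), p r a b) ↔ a = b) ∧
    (∀ a b : E, (∃ r ∈ ({z} : Set E), p a r b) ↔ a = b) ∧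
    -- coassociativity
    (∀ a x y w : E,
      (∃ u, (∃ u' w' v, p u u' o ∧ p w w' o ∧ p u' w' v ∧ p a v o) ∧
            (∃ x' y' v, p x x' o ∧ p y y' o ∧ p x' y' v ∧ p u v o)) ↔
      (∃ t, (∃ x' t' v, p x x' o ∧ p t t' o ∧ p x' t' v ∧ p a v o) ∧
            (∃ y' w' v, p y y' o ∧ p w w' o ∧ p y' w' v ∧ p t v o))) ∧
    -- counit law
    (∀ a b : E,
      (∃ e ∈ ({o} : Set E),
        ∃ e' b' u, p e e' o ∧ p b b' o ∧ p e' b' u ∧ p a u o) ↔ a = b) ∧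
    (∀ a b : E,
      (∃ e ∈ ({o} : Set E),
        ∃ b' e' u, p b b' o ∧ p e e' o ∧ p b' e' u ∧ p a u o) ↔ a = b) ∧
    -- Frobenius identity
    (∀ a b y w : E,
      ((∃ c, p a b c ∧ ∃ y' w' u, p y y' o ∧ p w w' o ∧ p y' w' u ∧ p c u o) ↔
        (∃ u, (∃ u' w' v, p u u' o ∧ p w w' o ∧ p u' w' v ∧ p b v o) ∧
          p a u y)) ∧
      ((∃ c, p a b c ∧ ∃ y' w' u, p y y' o ∧ p w w' o ∧ p y' w' u ∧ p c u o) ↔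
        (∃ v, (∃ y' v' t, p y y' o ∧ p v v' o ∧ p y' v' t ∧ p a t o) ∧
          p v b w))) := by
  -- uniqueness of orthocomplements
  have uniq : ∀ a b c : E, p a b o → p a c o → b = c := by
    intro a b c h1 h2
    exact ((horth a).unique h1 h2)
  have uniq' : ∀ a b c : E, p b a o → p c a o → b = c := by
    intro a b c h1 h2
    exact uniq a b c (hcomm b a o h1) (hcomm c a o h2)
  -- the Frobenius A ↔ B lemma, proved once for all a b y w
  have fAB : ∀ a b y w : E,
      (∃ c, p a b c ∧ ∃ y' w' u, p y y' o ∧ p w w' o ∧ p y' w' u ∧ p c u o) ↔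
      (∃ u, (∃ u' w' v, p u u' o ∧ p w w' o ∧ p u' w' v ∧ p b v o) ∧ p a u y) := by
    intro a b y w
    constructor
    · rintro ⟨c, hab, y₁, w₁, u, hy, hw, hyw, hcu⟩
      -- p c w₁ y
      obtain ⟨x, hx1, hx2⟩ := (hassocEA c w₁ y₁ o).mpr ⟨u, hcomm _ _ _ hyw, hcu⟩
      have hxy : x = y := uniq y₁ x y (hcomm _ _ _ hx2) (hcomm _ _ _ hy)
      rw [hxy] at hx1
      -- (a⊕b)⊕w₁ ≃ y
      obtain ⟨m, hbw, ham⟩ := (hassocEA a b w₁ y).mp ⟨c, hab, hx1⟩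
      obtain ⟨m₁, hm1, -⟩ := horth m
      obtain ⟨v, hv1, hv2⟩ := (hassocEA b w₁ m₁ o).mp ⟨m, hbw, hm1⟩
      exact ⟨m, ⟨m₁, w₁, v, hm1, hw, hcomm _ _ _ hv1, hv2⟩, ham⟩
    · rintro ⟨m, ⟨m₁, w₁, v, hm, hw, h1, hbv⟩, ham⟩
      -- p b w₁ m
      obtain ⟨x, hx1, hx2⟩ := (hassocEA b w₁ m₁ o).mpr ⟨v, hcomm _ _ _ h1, hbv⟩
      have hxm : x = m := uniq m₁ x m (hcomm _ _ _ hx2) (hcomm _ _ _ hm)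
      subst hxm
      obtain ⟨c, hab, hcw⟩ := (hassocEA a b w₁ y).mpr ⟨x, hx1, ham⟩
      obtain ⟨y₁, hy1, -⟩ := horth y
      obtain ⟨u, hu1, hu2⟩ := (hassocEA c w₁ y₁ o).mp ⟨y, hcw, hy1⟩
      exact ⟨c, hab, y₁, w₁, u, hy1, hw, hcomm _ _ _ hu1, hu2⟩
  refine ⟨hassocEA, ?_, ?_, ?_, ?_, ?_, ?_⟩
  · -- left unit
    intro a b
    constructor
    · rintro ⟨r, hr, hrab⟩
      have hrz : r = z := hr
      rw [hrz] at hrab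
      exact hfun a z a b (hzero a) (hcomm _ _ _ hrab)
    · rintro rfl
      exact ⟨z, rfl, hcomm _ _ _ (hzero a)⟩
  · -- right unit
    intro a b
    constructor
    · rintro ⟨r, hr, hrab⟩
      have hrz : r = z := hr
      rw [hrz] at hrab
      exact hfun a z a b (hzero a) hrab
    · rintro rfl
      exact ⟨z, rfl, hzero a⟩
  · -- coassociativity
    intro a x y w
    constructor
    · rintro ⟨u, ⟨u₁, w₁, v₁, hu1, hw1, h11, hav⟩, ⟨x₁, y₁, v₂, hx1, hy1, h22, huv⟩⟩
      have : u₁ = v₂ := uniq u u₁ v₂ hu1 huv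
      subst this
      obtain ⟨r, hr1, hr2⟩ := (hassocEA x₁ y₁ w₁ v₁).mp ⟨u₁, h22, h11⟩
      obtain ⟨t, ht, -⟩ := horth r
      exact ⟨t, ⟨x₁, r, v₁, hx1, hcomm _ _ _ ht, hr2, hav⟩,
             ⟨y₁, w₁, r, hy1, hw1, hr1, hcomm _ _ _ ht⟩⟩
    · rintro ⟨t, ⟨x₁, t₁, v₁, hx1, ht1, h11, hav⟩, ⟨y₁, w₁, v₂, hy1, hw1, h22, htv⟩⟩
      have : t₁ = v₂ := uniq t t₁ v₂ ht1 htv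
      subst this
      obtain ⟨s, hs1, hs2⟩ := (hassocEA x₁ y₁ w₁ v₁).mpr ⟨t₁, h22, h11⟩
      obtain ⟨u, hu, -⟩ := horth s
      exact ⟨u, ⟨s, w₁, v₁, hcomm _ _ _ hu, hw1, hs2, hav⟩,
             ⟨x₁, y₁, s, hx1, hy1, hs1, hcomm _ _ _ hu⟩⟩
  · -- left counit
    intro a b
    constructor
    · rintro ⟨e, he, e', b', u, hoe, hbb, heb, hau⟩
      have heo : e = o := he
      rw [heo] at hoe
      have he'z : e' = z := uniq o e' z hoe (hzero o)
      rw [he'z] at heb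
      have hub : u = b' := (hfun b' z b' u (hzero b') (hcomm _ _ _ heb)).symm
      rw [hub] at hau
      exact uniq' b' a b hau hbb
    · rintro rfl
      obtain ⟨b', hb', -⟩ := horth a
      exact ⟨o, rfl, z, b', b', hzero o, hb', hcomm _ _ _ (hzero b'), hb'⟩
  · -- right counit
    intro a b
    constructor
    · rintro ⟨e, he, b', e', u, hbb, hoe, hbe, hau⟩
      have heo : e = o := he
      rw [heo] at hoe
      have he'z : e' = z := uniq o e' z hoe (hzero o)
      rw [he'z] at hbe
      have hub : u = b' := (hfun b' z b' u (hzero b') hbe).symm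
      rw [hub] at hau
      exact uniq' b' a b hau hbb
    · rintro rfl
      obtain ⟨b', hb', -⟩ := horth a
      exact ⟨o, rfl, b', z, b', hb', hzero o, hzero b', hb'⟩
  · -- Frobenius identity
    intro a b y w
    constructor
    · exact fAB a b y w
    · -- A(a,b,y,w) ↔ A(b,a,w,y) ↔ B(b,a,w,y) ↔ C(a,b,y,w)
      have hsym : (∃ c, p a b c ∧ ∃ y' w' u, p y y' o ∧ p w w' o ∧ p y' w' u ∧ p c u o) ↔
          (∃ c, p b a c ∧ ∃ w' y' u, p w w' o ∧ p y y' o ∧ p w' y' u ∧ p c u o) := by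
        constructor
        · rintro ⟨c, hab, y₁, w₁, u, hy, hw, hyw, hcu⟩
          exact ⟨c, hcomm _ _ _ hab, w₁, y₁, u, hw, hy, hcomm _ _ _ hyw, hcu⟩
        · rintro ⟨c, hab, w₁, y₁, u, hw, hy, hyw, hcu⟩
          exact ⟨c, hcomm _ _ _ hab, y₁, w₁, u, hy, hw, hcomm _ _ _ hyw, hcu⟩
      rw [hsym, fAB b a w y]
      constructor
      · rintro ⟨u, ⟨u₁, y₁, v, hu, hy, h1, hav⟩, hbu⟩
        exact ⟨u, ⟨y₁, u₁, v, hy, hu, hcomm _ _ _ h1, hav⟩, hcomm _ _ _ hbu⟩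
      · rintro ⟨u, ⟨y₁, u₁, v, hy, hu, h1, hav⟩, hub⟩
        exact ⟨u, ⟨u₁, y₁, v, hu, hy, hcomm _ _ _ h1, hav⟩, hcomm _ _ _ hub⟩
end
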